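/- Let H be a central hyperplane arrangement in an n-dimensional inner product space, given by a set E of unit vectors with E ∩ (−E) = ∅, and let e ∈ E. Let U₁, U₂ be chambers of the restricted arrangement H''_e on the hyperplane H_e, and let Z₁, Z₂ be the unique chambers of the even restricted arrangement H_e containing U₁ and U₂ respectively. Then |S_H(U₁ ∘ e, U₂ ∘ e)| ≡ |S_{H_e}(Z₁, Z₂)| (mod 2), where U ∘ e denotes the chamber of H obtained by composing the face U with the direction e. -/
import Mathlib


open scoped RealInnerProductSpace

noncomputable section
attribute [local instance] Classical.propDecidable

/-- The hyperplane orthogonal to `e`. -/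
def hyp {n : ℕ} (e : EuclideanSpace ℝ (Fin n)) : Submodule ℝ (EuclideanSpace ℝ (Fin n)) :=
  (ℝ ∙ e)ᗮ

lemma mem_hyp {n : ℕ} {e x : EuclideanSpace ℝ (Fin n)} : x ∈ hyp e ↔ ⟪e, x⟫ = 0 :=
  Submodule.mem_orthogonal_singleton_iff_inner_right

lemma cross_id {n : ℕ} {e f g : EuclideanSpace ℝ (Fin n)} (h : hyp e ⊓ hyp f ≤ hyp g)
    {x₁ x₂ : EuclideanSpace ℝ (Fin n)} (h1 : ⟪e, x₁⟫ = 0) (h2 : ⟪e, x₂⟫ = 0) :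
    ⟪g, x₂⟫ * ⟪f, x₁⟫ = ⟪g, x₁⟫ * ⟪f, x₂⟫ := by
  have hy : (⟪f, x₁⟫ • x₂ - ⟪f, x₂⟫ • x₁) ∈ hyp e ⊓ hyp f := by
    refine Submodule.mem_inf.mpr ⟨?_, ?_⟩
    · rw [mem_hyp, inner_sub_right, real_inner_smul_right, real_inner_smul_right, h1, h2]; ring
    · rw [mem_hyp, inner_sub_right, real_inner_smul_right, real_inner_smul_right]; ring
  have hz := h hy
  rw [mem_hyp, inner_sub_right, real_inner_smul_right, real_inner_smul_right] at hz
  linarith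

lemma fiber_eq {n : ℕ} {e f g : EuclideanSpace ℝ (Fin n)}
    (hne : ‖e‖ = 1) (hng : ‖g‖ = 1) (hge : g ≠ e) (hgne : g ≠ -e)
    (h : hyp e ⊓ hyp f ≤ hyp g) : hyp e ⊓ hyp g = hyp e ⊓ hyp f := by
  have hspan : g ∈ (ℝ ∙ e) ⊔ (ℝ ∙ f) := by
    have h' : ((ℝ ∙ e) ⊔ (ℝ ∙ f))ᗮ ≤ (ℝ ∙ g)ᗮ := by
      rw [← Submodule.inf_orthogonal]; exact h
    have h'' := Submodule.orthogonal_le h'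
    rw [Submodule.orthogonal_orthogonal, Submodule.orthogonal_orthogonal] at h''
    exact h'' (Submodule.mem_span_singleton_self g)
  obtain ⟨u, hu, v, hv, huv⟩ := Submodule.mem_sup.mp hspan
  obtain ⟨a, rfl⟩ := Submodule.mem_span_singleton.mp hu
  obtain ⟨b, rfl⟩ := Submodule.mem_span_singleton.mp hv
  have hb : b ≠ 0 := by
    rintro rfl
    simp only [zero_smul, add_zero] at huv
    have : |a| = 1 := by
      have h2 := congrArg norm huv
      rw [norm_smul, hne, hng] at h2
      simpa [Real.norm_eq_abs] using h2
    rcases abs_eq (by norm_num : (0:ℝ) ≤ 1) |>.mp this with rfl | rfl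
    · exact hge (by simpa using huv.symm)
    · exact hgne (by simp [← huv])
  refine le_antisymm ?_ (le_inf inf_le_left h)
  intro x hx
  rw [Submodule.mem_inf] at hx ⊢
  obtain ⟨hxe, hxg⟩ := hx
  rw [mem_hyp] at hxe hxg
  refine ⟨mem_hyp.mpr hxe, mem_hyp.mpr ?_⟩
  have : ⟪g, x⟫ = a * ⟪e, x⟫ + b * ⟪f, x⟫ := by
    rw [← huv, inner_add_left, real_inner_smul_left, real_inner_smul_left]
  rw [this, hxe] at hxg
  have : b * ⟪f, x⟫ = 0 := by linarith
  exact (mul_eq_zero.mp this).resolve_left hb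

lemma sum_parity {α : Type*} (s : Finset α) (c : α → ℕ) :
    (∑ x ∈ s, c x) ≡ (s.filter (fun x => Odd (c x))).card [MOD 2] := by
  have key : (s.filter (fun x => Odd (c x))).card = ∑ x ∈ s, (c x % 2) := by
    rw [Finset.card_filter]
    refine Finset.sum_congr rfl fun x _ => ?_
    rcases Nat.even_or_odd (c x) with hx | hx
    · simp [Nat.even_iff.mp hx, hx, Nat.not_odd_iff_even.mpr hx]
    · simp [Nat.odd_iff.mp hx, hx]
  unfold Nat.ModEq
  rw [key, Finset.sum_nat_mod]

/-- The intersection multiplicity of the codimension-2 subspace `H_e ∩ H_f`: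
the number of `g ∈ E` whose hyperplane contains it. -/
def imult {n : ℕ} (E : Finset (EuclideanSpace ℝ (Fin n))) (e f : EuclideanSpace ℝ (Fin n)) : ℕ :=
  {g | g ∈ E ∧ hyp e ⊓ hyp f ≤ hyp g}.ncard

/-- The region (chamber, if nonempty) of the restricted arrangement `H''_e` on the hyperplane
`H_e` given by a sign vector `σ` on `E \ {e}`. -/
def resRegion {n : ℕ} (E : Finset (EuclideanSpace ℝ (Fin n))) (e : EuclideanSpace ℝ (Fin n))
    (σ : EuclideanSpace ℝ (Fin n) → Bool) : Set (EuclideanSpace ℝ (Fin n)) :=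
  {x | ⟪e, x⟫ = 0 ∧ ∀ f ∈ E, f ≠ e → (if σ f then 0 < ⟪f, x⟫ else ⟪f, x⟫ < 0)}


lemma bool_sign_iff {b1 b2 : Bool} {r1 r2 : ℝ} (t1 : if b1 then 0 < r1 else r1 < 0)
    (t2 : if b2 then 0 < r2 else r2 < 0) : b1 ≠ b2 ↔ r1 * r2 < 0 := by
  constructor
  · intro hne
    cases b1 <;> cases b2 <;> simp_all <;> nlinarith
  · intro hlt heq
    subst heq
    cases b1 <;> simp_all <;> nlinarith

lemma ne_of_if {b : Bool} {r : ℝ} (t : if b then 0 < r else r < 0) : r ≠ 0 := by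
  split at t
  · exact t.ne'
  · exact t.ne

lemma sign_iff {n : ℕ} {E : Finset (EuclideanSpace ℝ (Fin n))} {e : EuclideanSpace ℝ (Fin n)}
    {σ₁ σ₂ : EuclideanSpace ℝ (Fin n) → Bool} {x₁ x₂ : EuclideanSpace ℝ (Fin n)}
    (hx₁ : x₁ ∈ resRegion E e σ₁) (hx₂ : x₂ ∈ resRegion E e σ₂)
    {f g : EuclideanSpace ℝ (Fin n)} (hf : f ∈ E) (hfe : f ≠ e) (hg : g ∈ E) (hge : g ≠ e)
    (hle : hyp e ⊓ hyp f ≤ hyp g) : (σ₁ f ≠ σ₂ f) ↔ (σ₁ g ≠ σ₂ g) := by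
  have hc := cross_id hle hx₁.1 hx₂.1
  have hf1 := hx₁.2 f hf hfe
  have hf2 := hx₂.2 f hf hfe
  have hg1 := hx₁.2 g hg hge
  have hg2 := hx₂.2 g hg hge
  rw [bool_sign_iff hf1 hf2, bool_sign_iff hg1 hg2]
  have hf1' := ne_of_if hf1
  have hf2' := ne_of_if hf2
  have hg1' := ne_of_if hg1
  have hg2' := ne_of_if hg2
  have hpos : 0 < (⟪f, x₁⟫ * ⟪f, x₂⟫) * (⟪g, x₁⟫ * ⟪g, x₂⟫) := by
    have heq2 : (⟪f, x₁⟫ * ⟪f, x₂⟫) * (⟪g, x₁⟫ * ⟪g, x₂⟫) = (⟪g, x₁⟫ * ⟪f, x₂⟫) ^ 2 := by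
      calc (⟪f, x₁⟫ * ⟪f, x₂⟫) * (⟪g, x₁⟫ * ⟪g, x₂⟫)
          = (⟪g, x₂⟫ * ⟪f, x₁⟫) * (⟪g, x₁⟫ * ⟪f, x₂⟫) := by ring
        _ = (⟪g, x₁⟫ * ⟪f, x₂⟫) ^ 2 := by rw [hc]; ring
    rw [heq2]
    have hne0 : ⟪g, x₁⟫ * ⟪f, x₂⟫ ≠ 0 := mul_ne_zero hg1' hf2'
    exact lt_of_le_of_ne (sq_nonneg _) (Ne.symm (pow_ne_zero 2 hne0))
  constructor <;> intro h <;> nlinarith [hpos]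

/-- Let `U₁, U₂` be chambers of the restricted arrangement `H''_e` (encoded by sign vectors
`σ₁, σ₂` with nonempty regions) and let `Z₁, Z₂` be the chambers of the even restricted
arrangement `H_e` containing them.  The separation set `S_H(U₁ ∘ e, U₂ ∘ e)` consists of the
hyperplanes `H_f`, `f ∈ E \ {e}`, with `σ₁ f ≠ σ₂ f`, and the separation set
`S_{H_e}(Z₁, Z₂)` consists of the even-multiplicity subspaces `H_e ∩ H_f` with
`f ∈ E \ {e}` and `σ₁ f ≠ σ₂ f`.  Their cardinalities agree modulo 2. -/
theorem parity_separation {n : ℕ} (E : Finset (EuclideanSpace ℝ (Fin n)))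
    (hunit : ∀ e ∈ E, ‖e‖ = 1) (hopp : ∀ e ∈ E, -e ∉ E)
    (e : EuclideanSpace ℝ (Fin n)) (he : e ∈ E)
    (σ₁ σ₂ : EuclideanSpace ℝ (Fin n) → Bool)
    (h₁ : (resRegion E e σ₁).Nonempty) (h₂ : (resRegion E e σ₂).Nonempty) :
    {f | f ∈ E ∧ f ≠ e ∧ σ₁ f ≠ σ₂ f}.ncard ≡
      ((fun f => hyp e ⊓ hyp f) ''
        {f | f ∈ E ∧ f ≠ e ∧ Even (imult E e f) ∧ σ₁ f ≠ σ₂ f}).ncard [MOD 2] := by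
  classical
  obtain ⟨x₁, hx₁⟩ := h₁
  obtain ⟨x₂, hx₂⟩ := h₂
  set φ : EuclideanSpace ℝ (Fin n) → Submodule ℝ (EuclideanSpace ℝ (Fin n)) :=
    fun f => hyp e ⊓ hyp f with hφdef
  set A : Finset (EuclideanSpace ℝ (Fin n)) :=
    E.filter (fun f => f ≠ e ∧ σ₁ f ≠ σ₂ f) with hAdef
  set B : Finset (EuclideanSpace ℝ (Fin n)) :=
    E.filter (fun f => f ≠ e ∧ Even (imult E e f) ∧ σ₁ f ≠ σ₂ f) with hBdef
  have hset1 : {f | f ∈ E ∧ f ≠ e ∧ σ₁ f ≠ σ₂ f} = ↑A := by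
    ext f; simp [hAdef]
  have hset2 : (φ '' {f | f ∈ E ∧ f ≠ e ∧ Even (imult E e f) ∧ σ₁ f ≠ σ₂ f})
      = ↑(B.image φ) := by
    ext W
    simp only [Set.mem_image, Set.mem_setOf_eq, Finset.coe_image, Finset.mem_coe,
      Finset.mem_filter, hBdef]
  rw [hset1, hset2, Set.ncard_coe_finset, Set.ncard_coe_finset]
  have hfib : ∀ g ∈ E, g ≠ e → ∀ f, hyp e ⊓ hyp f ≤ hyp g → φ g = φ f := by
    intro g hg hge f hle
    exact fiber_eq (hunit e he) (hunit g hg) hge (fun hgne => hopp e he (hgne ▸ hg)) hle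
  have himult : ∀ f ∈ E, f ≠ e →
      imult E e f = (E.filter (fun g => g ≠ e ∧ φ g = φ f)).card + 1 := by
    intro f hf hfe
    have hsets : {g | g ∈ E ∧ hyp e ⊓ hyp f ≤ hyp g}
        = ↑(insert e (E.filter (fun g => g ≠ e ∧ φ g = φ f))) := by
      ext g
      simp only [Set.mem_setOf_eq, Finset.coe_insert, Set.mem_insert_iff,
        Finset.coe_filter, Set.mem_setOf_eq, Finset.mem_filter]
      constructor
      · rintro ⟨hg, hle⟩
        by_cases hge : g = e
        · exact Or.inl hge
        · exact Or.inr ⟨hg, hge, hfib g hg hge f hle⟩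
      · rintro (rfl | ⟨hg, hge, heq⟩)
        · exact ⟨he, inf_le_left⟩
        · exact ⟨hg, (heq.symm.le).trans inf_le_right⟩
    rw [imult, hsets, Set.ncard_coe_finset, Finset.card_insert_of_notMem (by simp)]
  have hAfilter : ∀ f ∈ A, A.filter (fun g => φ g = φ f)
      = E.filter (fun g => g ≠ e ∧ φ g = φ f) := by
    intro f hfA
    have hfA' := Finset.mem_filter.mp hfA
    have hf := hfA'.1
    have hfe := hfA'.2.1
    have hσf := hfA'.2.2
    ext g
    simp only [hAdef, Finset.mem_filter]
    constructor
    · rintro ⟨⟨hg, hge, _⟩, heq⟩; exact ⟨hg, hge, heq⟩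
    · rintro ⟨hg, hge, heq⟩
      have hle : hyp e ⊓ hyp f ≤ hyp g := (heq.symm.le).trans inf_le_right
      exact ⟨⟨hg, hge, (sign_iff hx₁ hx₂ hf hfe hg hge hle).mp hσf⟩, heq⟩
  have hsum : A.card = ∑ W ∈ A.image φ, (A.filter (fun g => φ g = W)).card :=
    Finset.card_eq_sum_card_fiberwise (fun x hx => Finset.mem_image_of_mem φ hx)
  rw [hsum]
  refine (sum_parity (A.image φ) (fun W => (A.filter (fun g => φ g = W)).card)).trans ?_
  have hfinal : (A.image φ).filter (fun W => Odd ((A.filter (fun g => φ g = W)).card))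
      = B.image φ := by
    ext W
    simp only [Finset.mem_filter, Finset.mem_image]
    constructor
    · rintro ⟨⟨f, hfA, rfl⟩, hodd⟩
      have hfA' := Finset.mem_filter.mp hfA
      have hf := hfA'.1
      have hfe := hfA'.2.1
      have hσf := hfA'.2.2
      refine ⟨f, Finset.mem_filter.mpr ⟨hf, hfe, ?_, hσf⟩, rfl⟩
      have h1 : imult E e f = (A.filter (fun g => φ g = φ f)).card + 1 := by
        rw [hAfilter f hfA]; exact himult f hf hfe
      rw [h1]
      exact Odd.add_one hodd
    · rintro ⟨f, hfB, rfl⟩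
      have hfB' := Finset.mem_filter.mp hfB
      have hf := hfB'.1
      have hfe := hfB'.2.1
      have hev := hfB'.2.2.1
      have hσf := hfB'.2.2.2
      have hfA : f ∈ A := Finset.mem_filter.mpr ⟨hf, hfe, hσf⟩
      refine ⟨⟨f, hfA, rfl⟩, ?_⟩
      have h1 : imult E e f = (A.filter (fun g => φ g = φ f)).card + 1 := by
        rw [hAfilter f hfA]; exact himult f hf hfe
      rw [h1] at hev
      exact Nat.not_even_iff_odd.mp (Nat.even_add_one.mp hev)
  rw [hfinal]
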